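/- On a star graph with N ≥ 2 edges, the constant N/2 in the graph Pólya–Szegő inequality ‖(Φ*)'‖ ≤ (N/2)‖Φ'‖ is sharp: for the tent function Φ with φ₁(x) = x on [0,1], φ₁(x) = 2−x on [1,2], φ₁ = 0 for x ≥ 2, and φ_i ≡ 0 for i ≠ 1, the rearrangement has components g(x) = 1 − (N/2)x for 0 ≤ x ≤ 2/N and g(x) = 0 for x ≥ 2/N, and one computes ‖Φ'‖² = 2 while ‖(Φ*)'‖² = N²/2, so ‖(Φ*)'‖² = (N²/4)‖Φ'‖². -/

import Mathlib

open MeasureTheory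

noncomputable section

/-- Distribution function on the star graph (real-valued components):
`λ(s) = Σᵢ |{x > 0 : |φᵢ(x)| ≥ s}|`. -/
def lamG (N : ℕ) (Φ : Fin N → ℝ → ℝ) (s : ℝ) : ENNReal :=
  ∑ i, volume {x ∈ Set.Ioi (0 : ℝ) | s ≤ |Φ i x|}

/-- The common profile `g(t) = sup{s : λ(s) > N t}` of the symmetric rearrangement. -/
def rearrG (N : ℕ) (Φ : Fin N → ℝ → ℝ) (t : ℝ) : ℝ :=
  sSup {s : ℝ | ENNReal.ofReal ((N : ℝ) * t) < lamG N Φ s}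

/-- The tent function supported on the first edge of the star graph. -/
def tentFun (N : ℕ) (hN : 0 < N) : Fin N → ℝ → ℝ := fun i x =>
  if i = ⟨0, hN⟩ then (if x ≤ 1 then x else if x ≤ 2 then 2 - x else 0) else 0

-- lamG for s ≤ 0 is ⊤
lemma lam_top (N : ℕ) (hN0 : 0 < N) {s : ℝ} (hs : s ≤ 0) :
    lamG N (tentFun N hN0) s = ⊤ := by
  have h0 : volume {x ∈ Set.Ioi (0 : ℝ) | s ≤ |tentFun N hN0 ⟨0, hN0⟩ x|} = ⊤ := by
    have : {x ∈ Set.Ioi (0 : ℝ) | s ≤ |tentFun N hN0 ⟨0, hN0⟩ x|} = Set.Ioi 0 := by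
      ext x; simp only [Set.mem_setOf_eq, Set.mem_Ioi]
      exact ⟨fun h => h.1, fun h => ⟨h, hs.trans (abs_nonneg _)⟩⟩
    rw [this, Real.volume_Ioi]
  refine eq_top_iff.2 ?_
  rw [lamG]
  calc (⊤ : ENNReal) = volume {x ∈ Set.Ioi (0 : ℝ) | s ≤ |tentFun N hN0 ⟨0, hN0⟩ x|} := h0.symm
  _ ≤ _ := Finset.single_le_sum (f := fun i => volume {x ∈ Set.Ioi (0 : ℝ) | s ≤ |tentFun N hN0 i x|})
      (fun i _ => zero_le) (Finset.mem_univ _)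

-- lamG for 0 < s ≤ 1
lemma lam_mid (N : ℕ) (hN0 : 0 < N) {s : ℝ} (hs : 0 < s) (hs1 : s ≤ 1) :
    lamG N (tentFun N hN0) s = ENNReal.ofReal (2 - 2*s) := by
  have key : ∀ i : Fin N, volume {x ∈ Set.Ioi (0 : ℝ) | s ≤ |tentFun N hN0 i x|}
      = if i = ⟨0, hN0⟩ then ENNReal.ofReal (2 - 2*s) else 0 := by
    intro i
    by_cases hi : i = ⟨0, hN0⟩
    · rw [if_pos hi]
      have hset : {x ∈ Set.Ioi (0 : ℝ) | s ≤ |tentFun N hN0 i x|} = Set.Icc s (2 - s) := by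
        ext x
        simp only [Set.mem_setOf_eq, Set.mem_Ioi, Set.mem_Icc, tentFun, if_pos hi]
        constructor
        · rintro ⟨hx, habs⟩
          split_ifs at habs with h1 h2
          · rw [abs_of_nonneg hx.le] at habs; constructor <;> linarith
          · rw [abs_of_nonneg (by linarith)] at habs; constructor <;> linarith
          · rw [abs_zero] at habs; linarith
        · rintro ⟨h1, h2⟩
          have hx : 0 < x := lt_of_lt_of_le hs h1
          refine ⟨hx, ?_⟩
          split_ifs with ha hb
          · rwa [abs_of_nonneg hx.le]
          · rw [abs_of_nonneg (by linarith)]; linarith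
          · linarith
      rw [hset, Real.volume_Icc]
      ring_nf
    · rw [if_neg hi]
      have hset : {x ∈ Set.Ioi (0 : ℝ) | s ≤ |tentFun N hN0 i x|} = ∅ := by
        ext x
        simp only [Set.mem_setOf_eq, Set.mem_empty_iff_false, iff_false, not_and, tentFun,
          if_neg hi, abs_zero]
        intro _; linarith
      rw [hset]; simp
  rw [lamG]
  simp_rw [key]
  simp

-- lamG for s > 1 is 0
lemma lam_high (N : ℕ) (hN0 : 0 < N) {s : ℝ} (hs : 1 < s) :
    lamG N (tentFun N hN0) s = 0 := by
  rw [lamG]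
  refine Finset.sum_eq_zero fun i _ => ?_
  have hset : {x ∈ Set.Ioi (0 : ℝ) | s ≤ |tentFun N hN0 i x|} = ∅ := by
    ext x
    simp only [Set.mem_setOf_eq, Set.mem_empty_iff_false, iff_false, not_and]
    intro hx
    have : |tentFun N hN0 i x| ≤ 1 := by
      rw [tentFun]
      split_ifs with hi h1 h2
      · rw [abs_of_nonneg (le_of_lt hx)]; exact h1
      · rw [abs_of_nonneg (by linarith)]; linarith
      · simp
      · simp
    intro h; linarith
  rw [hset]; simp



lemma rearr_eq (N : ℕ) (hN0 : 0 < N) (t : ℝ) (ht : 0 ≤ t) :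
    rearrG N (tentFun N hN0) t = if t ≤ 2 / (N : ℝ) then 1 - ((N : ℝ) / 2) * t else 0 := by
  have hNpos : (0:ℝ) < N := by exact_mod_cast hN0
  have hNt : 0 ≤ (N : ℝ) * t := by positivity
  rw [rearrG]
  rcases lt_or_ge ((N:ℝ) * t) 2 with hlt | hge
  · -- t < 2/N
    have ht2 : t < 2 / (N : ℝ) := by rw [lt_div_iff₀ hNpos]; linarith
    have hS : {s : ℝ | ENNReal.ofReal ((N : ℝ) * t) < lamG N (tentFun N hN0) s}
        = Set.Iio (1 - ((N : ℝ) / 2) * t) := by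
      ext s
      simp only [Set.mem_setOf_eq, Set.mem_Iio]
      constructor
      · intro h
        by_contra hc
        push_neg at hc
        have hs0 : 0 < s := by nlinarith
        rcases le_or_gt s 1 with hs1 | hs1
        · rw [lam_mid N hN0 hs0 hs1] at h
          rw [ENNReal.ofReal_lt_ofReal_iff_of_nonneg hNt] at h
          nlinarith
        · rw [lam_high N hN0 hs1] at h
          exact absurd h (by simp)
      · intro h
        rcases le_or_gt s 0 with hs0 | hs0
        · rw [lam_top N hN0 hs0]; exact ENNReal.ofReal_lt_top.trans_le le_top
        · have hs1 : s ≤ 1 := by nlinarith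
          rw [lam_mid N hN0 hs0 hs1,
            ENNReal.ofReal_lt_ofReal_iff_of_nonneg hNt]
          nlinarith
    rw [hS, csSup_Iio, if_pos ht2.le]
  · -- t ≥ 2/N
    have ht2 : 2 / (N : ℝ) ≤ t := by rw [div_le_iff₀ hNpos]; linarith
    have hS : {s : ℝ | ENNReal.ofReal ((N : ℝ) * t) < lamG N (tentFun N hN0) s}
        = Set.Iic 0 := by
      ext s
      simp only [Set.mem_setOf_eq, Set.mem_Iic]
      constructor
      · intro h
        by_contra hc
        push_neg at hc
        rcases le_or_gt s 1 with hs1 | hs1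
        · rw [lam_mid N hN0 hc hs1] at h
          rw [ENNReal.ofReal_lt_ofReal_iff_of_nonneg hNt] at h
          nlinarith
        · rw [lam_high N hN0 hs1] at h
          exact absurd h (by simp)
      · intro hs0
        rw [lam_top N hN0 hs0]; exact ENNReal.ofReal_lt_top.trans_le le_top
    rw [hS, csSup_Iic]
    rcases eq_or_lt_of_le ht2 with heq | hlt
    · rw [if_pos heq.symm.le, ← heq]
      field_simp
      norm_num
    · rw [if_neg (not_le.2 hlt)]

lemma integ_ind (a : ℝ) (ha : 0 ≤ a) (c : ℝ) :
    ∫ x in Set.Ioi (0:ℝ), (Set.Ioo (0:ℝ) a).indicator (fun _ => c) x = a * c := by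
  rw [setIntegral_indicator measurableSet_Ioo,
    Set.inter_eq_self_of_subset_right Set.Ioo_subset_Ioi_self,
    setIntegral_const, Real.volume_real_Ioo_of_le ha, smul_eq_mul]
  ring



lemma deriv_tent_sq_ae :
    ∀ᵐ x ∂(volume.restrict (Set.Ioi (0:ℝ))),
      (deriv (fun x : ℝ => if x ≤ 1 then x else if x ≤ 2 then 2 - x else 0) x)^2
        = (Set.Ioo (0:ℝ) 2).indicator (fun _ => (1:ℝ)) x := by
  have h12 : ∀ᵐ x : ℝ ∂volume, x ∉ ({1, 2} : Set ℝ) := by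
    rw [← measure_eq_zero_iff_ae_notMem]
    exact Set.Finite.measure_zero (Set.toFinite _) _
  filter_upwards [ae_restrict_mem measurableSet_Ioi, ae_restrict_of_ae h12] with x hx hx12
  simp only [Set.mem_insert_iff, Set.mem_singleton_iff, not_or] at hx12
  obtain ⟨hx1, hx2⟩ := hx12
  have hx0 : (0:ℝ) < x := hx
  rcases lt_or_gt_of_ne hx1 with h1 | h1
  · -- x < 1
    have heq : (fun x : ℝ => if x ≤ 1 then x else if x ≤ 2 then 2 - x else 0)
        =ᶠ[nhds x] fun y => y := by
      filter_upwards [Iio_mem_nhds h1] with y hy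
      rw [if_pos (le_of_lt hy)]
    rw [heq.deriv_eq, deriv_id'']
    rw [Set.indicator_of_mem (by exact ⟨hx0, by linarith⟩)]
    norm_num
  · rcases lt_or_gt_of_ne hx2 with h2 | h2
    · -- 1 < x < 2
      have heq : (fun x : ℝ => if x ≤ 1 then x else if x ≤ 2 then 2 - x else 0)
          =ᶠ[nhds x] fun y => 2 - y := by
        filter_upwards [Ioo_mem_nhds h1 h2] with y hy
        rw [if_neg (not_le.2 hy.1), if_pos hy.2.le]
      have hd : HasDerivAt (fun y : ℝ => 2 - y) (-1) x := by
        simpa using (hasDerivAt_id x).const_sub 2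
      rw [heq.deriv_eq, hd.deriv]
      rw [Set.indicator_of_mem (by exact ⟨hx0, h2⟩)]
      norm_num
    · -- x > 2
      have heq : (fun x : ℝ => if x ≤ 1 then x else if x ≤ 2 then 2 - x else 0)
          =ᶠ[nhds x] fun _ => (0:ℝ) := by
        filter_upwards [Ioi_mem_nhds h2] with y hy
        rw [if_neg (by push_neg; linarith [Set.mem_Ioi.1 hy]), if_neg (not_le.2 hy)]
      rw [heq.deriv_eq, deriv_const]
      rw [Set.indicator_of_notMem (by simp [Set.mem_Ioo]; intro _; linarith)]
      norm_num

lemma deriv_g_sq_ae (N : ℕ) (hNpos : (0:ℝ) < N) :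
    ∀ᵐ x ∂(volume.restrict (Set.Ioi (0:ℝ))),
      (deriv (fun x : ℝ => if x ≤ 2/(N:ℝ) then 1 - ((N:ℝ)/2)*x else 0) x)^2
        = (Set.Ioo (0:ℝ) (2/(N:ℝ))).indicator (fun _ => ((N:ℝ)/2)^2) x := by
  set c : ℝ := 2 / (N:ℝ) with hc
  have hcpos : 0 < c := by positivity
  have hcm : ∀ᵐ x : ℝ ∂volume, x ≠ c := by
    have h' : ∀ᵐ x : ℝ ∂volume, x ∉ ({c} : Set ℝ) :=
      measure_eq_zero_iff_ae_notMem.mp (measure_singleton c)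
    filter_upwards [h'] with y hy
    simpa using hy
  filter_upwards [ae_restrict_mem measurableSet_Ioi, ae_restrict_of_ae hcm] with x hx hxc
  have hx0 : (0:ℝ) < x := hx
  rcases lt_or_gt_of_ne hxc with h1 | h1
  · have heq : (fun x : ℝ => if x ≤ c then 1 - ((N:ℝ)/2)*x else 0)
        =ᶠ[nhds x] fun y => 1 - ((N:ℝ)/2)*y := by
      filter_upwards [Iio_mem_nhds h1] with y hy
      rw [if_pos (le_of_lt hy)]
    have hd : HasDerivAt (fun y : ℝ => 1 - (N:ℝ)/2 * y) (-((N:ℝ)/2)) x := by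
      simpa using ((hasDerivAt_id x).const_mul ((N:ℝ)/2)).const_sub 1
    rw [heq.deriv_eq, hd.deriv]
    rw [Set.indicator_of_mem (by exact ⟨hx0, h1⟩)]
    ring
  · have heq : (fun x : ℝ => if x ≤ c then 1 - ((N:ℝ)/2)*x else 0)
        =ᶠ[nhds x] fun _ => (0:ℝ) := by
      filter_upwards [Ioi_mem_nhds h1] with y hy
      rw [if_neg (not_le.2 hy)]
    rw [heq.deriv_eq, deriv_const]
    rw [Set.indicator_of_notMem (by simp [Set.mem_Ioo]; intro _; linarith)]
    norm_num


/-- Sharpness of the constant `N/2` in the graph Pólya–Szegő inequality: for the tent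
function `Φ`, the rearrangement profile is `g(x) = 1 - (N/2)x` on `[0, 2/N]` and `0`
afterwards, `‖Φ'‖² = 2`, `‖(Φ*)'‖² = N²/2`, so `‖(Φ*)'‖² = (N²/4)‖Φ'‖²`. -/
theorem polya_szego_constant_sharp (N : ℕ) (hN : 2 ≤ N) :
    have hN0 : 0 < N := by omega
    let Φ := tentFun N hN0
    let g : ℝ → ℝ := fun x => if x ≤ 2 / (N : ℝ) then 1 - ((N : ℝ) / 2) * x else 0
    (∀ x : ℝ, 0 ≤ x → rearrG N Φ x = g x) ∧
    (∑ i, ∫ x in Set.Ioi (0 : ℝ), (deriv (Φ i) x) ^ 2) = 2 ∧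
    (N : ℝ) * (∫ x in Set.Ioi (0 : ℝ), (deriv g x) ^ 2) = (N : ℝ) ^ 2 / 2 ∧
    (N : ℝ) ^ 2 / 2 = ((N : ℝ) ^ 2 / 4) * 2 := by
  intro hN0 Φ g
  have hNpos : (0:ℝ) < N := by exact_mod_cast hN0
  refine ⟨fun x hx => rearr_eq N hN0 x hx, ?_, ?_, by ring⟩
  · have key : ∀ i : Fin N, (∫ x in Set.Ioi (0:ℝ), (deriv (Φ i) x)^2)
        = if i = ⟨0, hN0⟩ then 2 else 0 := by
      intro i
      by_cases hi : i = ⟨0, hN0⟩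
      · rw [if_pos hi]
        have hΦ : Φ i = fun x : ℝ => if x ≤ 1 then x else if x ≤ 2 then 2 - x else 0 := by
          funext x; simp [Φ, tentFun, hi]
        rw [hΦ, integral_congr_ae deriv_tent_sq_ae, integ_ind 2 (by norm_num) 1]
        norm_num
      · rw [if_neg hi]
        have hΦ : Φ i = fun _ : ℝ => (0:ℝ) := by funext x; simp [Φ, tentFun, hi]
        rw [hΦ]; simp
    simp_rw [key]
    simp
  · rw [show g = fun x : ℝ => if x ≤ 2/(N:ℝ) then 1 - ((N:ℝ)/2)*x else 0 from rfl]
    rw [integral_congr_ae (deriv_g_sq_ae N hNpos), integ_ind (2/(N:ℝ)) (by positivity) _]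
    field_simp

end
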